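/- For every integer p ≥ 3 there exists an integer N such that every arrangement of at least N circles in the plane contains p circles every three of which form a Krupp triple, or p circles every three of which form a NonKrupp triple. -/

import Mathlib

noncomputable section

/-- The Euclidean plane. -/
abbrev E2 := EuclideanSpace ℝ (Fin 2)

/-- The circle with center `c` and radius `r` separates the points `p` and `q`
(not lying on it) if exactly one of them lies in its open disk. -/
def Separates (c : E2) (r : ℝ) (p q : E2) : Prop :=
  Xor' (p ∈ Metric.ball c r) (q ∈ Metric.ball c r)

/-- The circle with center `c`, radius `r` separates the two intersection points of the
other two circles. -/
def SepInt (c : E2) (r : ℝ) (c₁ : E2) (r₁ : ℝ) (c₂ : E2) (r₂ : ℝ) : Prop :=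
  ∀ p q : E2, p ≠ q → Metric.sphere c₁ r₁ ∩ Metric.sphere c₂ r₂ = {p, q} →
    Separates c r p q

/-- The circle with center `c`, radius `r` does not separate the two intersection points of
the other two circles. -/
def NonSepInt (c : E2) (r : ℝ) (c₁ : E2) (r₁ : ℝ) (c₂ : E2) (r₂ : ℝ) : Prop :=
  ∀ p q : E2, p ≠ q → Metric.sphere c₁ r₁ ∩ Metric.sphere c₂ r₂ = {p, q} →
    ¬ Separates c r p q

section Ramsey

def Hg2 {ι : Type} [LinearOrder ι] (c : ι → ι → Bool) (b : Bool) (T : Finset ι) : Prop :=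
  ∀ x ∈ T, ∀ y ∈ T, x < y → c x y = b

def Hg3 {ι : Type} [LinearOrder ι] (c : ι → ι → ι → Bool) (b : Bool) (T : Finset ι) : Prop :=
  ∀ x ∈ T, ∀ y ∈ T, ∀ z ∈ T, x < y → y < z → c x y z = b

theorem ramsey2aux : ∀ (k s t : ℕ), s + t ≤ k → ∃ N : ℕ,
    ∀ (ι : Type) [LinearOrder ι] (c : ι → ι → Bool) (S : Finset ι), N ≤ S.card →
      ∃ T ⊆ S, (T.card = s ∧ Hg2 c true T) ∨ (T.card = t ∧ Hg2 c false T) := by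
  intro k
  induction k with
  | zero =>
    intro s t hst
    exact ⟨0, fun ι _ c S _ => ⟨∅, Finset.empty_subset _,
      Or.inl ⟨by simp; omega, fun x hx => by simp at hx⟩⟩⟩
  | succ k ih =>
    intro s t hst
    match s, t with
    | 0, t =>
      exact ⟨0, fun ι _ c S _ => ⟨∅, Finset.empty_subset _,
        Or.inl ⟨rfl, fun x hx => by simp at hx⟩⟩⟩
    | s+1, 0 =>
      exact ⟨0, fun ι _ c S _ => ⟨∅, Finset.empty_subset _,
        Or.inr ⟨rfl, fun x hx => by simp at hx⟩⟩⟩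
    | s+1, t+1 =>
      obtain ⟨N₁, h₁⟩ := ih s (t+1) (by omega)
      obtain ⟨N₂, h₂⟩ := ih (s+1) t (by omega)
      refine ⟨N₁ + N₂ + 1, ?_⟩
      intro ι _ c S hS
      have hne : S.Nonempty := Finset.card_pos.mp (by omega)
      set v := S.min' hne with hv
      have hvS : v ∈ S := S.min'_mem hne
      set S' := S.erase v with hS'
      have hcard' : S'.card = S.card - 1 := Finset.card_erase_of_mem hvS
      classical
      set A := S'.filter (fun x => c v x = true) with hA
      set B := S'.filter (fun x => ¬ (c v x = true)) with hB
      have hAB : A.card + B.card = S'.card := Finset.card_filter_add_card_filter_not _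
      have hvlt : ∀ x ∈ S', v < x := by
        intro x hx
        have hxS : x ∈ S := Finset.mem_of_mem_erase hx
        have hxv : x ≠ v := Finset.ne_of_mem_erase hx
        exact lt_of_le_of_ne (S.min'_le x hxS) (Ne.symm hxv)
      have hcases : N₁ ≤ A.card ∨ N₂ ≤ B.card := by omega
      rcases hcases with hc | hc
      · obtain ⟨T, hTA, hT⟩ := h₁ ι c A hc
        have hTS : T ⊆ S := hTA.trans ((Finset.filter_subset _ _).trans (Finset.erase_subset _ _))
        rcases hT with ⟨hcard, hhom⟩ | ⟨hcard, hhom⟩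
        · have hvT : v ∉ T := by
            intro hvT
            have := hvlt v (Finset.filter_subset _ _ (hTA hvT))
            exact lt_irrefl _ this
          refine ⟨insert v T, Finset.insert_subset hvS hTS, Or.inl ⟨?_, ?_⟩⟩
          · rw [Finset.card_insert_of_notMem hvT, hcard]
          · intro x hx y hy hxy
            rcases Finset.mem_insert.mp hx with rfl | hxT
            · rcases Finset.mem_insert.mp hy with rfl | hyT
              · exact absurd hxy (lt_irrefl _)
              · exact (Finset.mem_filter.mp (hTA hyT)).2
            · rcases Finset.mem_insert.mp hy with rfl | hyT
              · exact absurd (hxy.trans (hvlt x (Finset.filter_subset _ _ (hTA hxT)))) (lt_irrefl _)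
              · exact hhom x hxT y hyT hxy
        · exact ⟨T, hTS, Or.inr ⟨hcard, hhom⟩⟩
      · obtain ⟨T, hTB, hT⟩ := h₂ ι c B hc
        have hTS : T ⊆ S := hTB.trans ((Finset.filter_subset _ _).trans (Finset.erase_subset _ _))
        rcases hT with ⟨hcard, hhom⟩ | ⟨hcard, hhom⟩
        · exact ⟨T, hTS, Or.inl ⟨hcard, hhom⟩⟩
        · have hvT : v ∉ T := by
            intro hvT
            have := hvlt v (Finset.filter_subset _ _ (hTB hvT))
            exact lt_irrefl _ this
          refine ⟨insert v T, Finset.insert_subset hvS hTS, Or.inr ⟨?_, ?_⟩⟩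
          · rw [Finset.card_insert_of_notMem hvT, hcard]
          · intro x hx y hy hxy
            rcases Finset.mem_insert.mp hx with rfl | hxT
            · rcases Finset.mem_insert.mp hy with rfl | hyT
              · exact absurd hxy (lt_irrefl _)
              · simpa using (Finset.mem_filter.mp (hTB hyT)).2
            · rcases Finset.mem_insert.mp hy with rfl | hyT
              · exact absurd (hxy.trans (hvlt x (Finset.filter_subset _ _ (hTB hxT)))) (lt_irrefl _)
              · exact hhom x hxT y hyT hxy

theorem ramsey3aux : ∀ (k s t : ℕ), s + t ≤ k → ∃ N : ℕ,
    ∀ (ι : Type) [LinearOrder ι] (c : ι → ι → ι → Bool) (S : Finset ι), N ≤ S.card →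
      ∃ T ⊆ S, (T.card = s ∧ Hg3 c true T) ∨ (T.card = t ∧ Hg3 c false T) := by
  intro k
  induction k with
  | zero =>
    intro s t hst
    exact ⟨0, fun ι _ c S _ => ⟨∅, Finset.empty_subset _,
      Or.inl ⟨by simp; omega, fun x hx => by simp at hx⟩⟩⟩
  | succ k ih =>
    intro s t hst
    match s, t with
    | 0, t =>
      exact ⟨0, fun ι _ c S _ => ⟨∅, Finset.empty_subset _,
        Or.inl ⟨rfl, fun x hx => by simp at hx⟩⟩⟩
    | s+1, 0 =>
      exact ⟨0, fun ι _ c S _ => ⟨∅, Finset.empty_subset _,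
        Or.inr ⟨rfl, fun x hx => by simp at hx⟩⟩⟩
    | s+1, t+1 =>
      obtain ⟨N₁, h₁⟩ := ih s (t+1) (by omega)
      obtain ⟨N₂, h₂⟩ := ih (s+1) t (by omega)
      obtain ⟨M, hM⟩ := ramsey2aux (N₁ + N₂) N₁ N₂ le_rfl
      refine ⟨M + 1, ?_⟩
      intro ι _ c S hS
      have hne : S.Nonempty := Finset.card_pos.mp (by omega)
      set v := S.min' hne with hv
      have hvS : v ∈ S := S.min'_mem hne
      set S' := S.erase v with hS'
      have hcard' : S'.card = S.card - 1 := Finset.card_erase_of_mem hvS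
      have hvlt : ∀ x ∈ S', v < x := by
        intro x hx
        exact lt_of_le_of_ne (S.min'_le x (Finset.mem_of_mem_erase hx))
          (Ne.symm (Finset.ne_of_mem_erase hx))
      obtain ⟨T, hTS', hT⟩ := hM ι (fun x y => c v x y) S' (by omega)
      have hTS : T ⊆ S := hTS'.trans (Finset.erase_subset _ _)
      rcases hT with ⟨hcard, hhom⟩ | ⟨hcard, hhom⟩
      · obtain ⟨U, hUT, hU⟩ := h₁ ι c T (le_of_eq hcard.symm)
        rcases hU with ⟨hUcard, hUhom⟩ | ⟨hUcard, hUhom⟩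
        · have hvU : v ∉ U := fun hvU => lt_irrefl _ (hvlt v (hTS' (hUT hvU)))
          refine ⟨insert v U, Finset.insert_subset hvS ((hUT.trans hTS)),
            Or.inl ⟨by rw [Finset.card_insert_of_notMem hvU, hUcard], ?_⟩⟩
          intro x hx y hy z hz hxy hyz
          have hUS' : U ⊆ S' := hUT.trans hTS'
          rcases Finset.mem_insert.mp hx with rfl | hxU
          · have hyU : y ∈ U := by
              rcases Finset.mem_insert.mp hy with rfl | h
              · exact absurd hxy (lt_irrefl _)
              · exact h
            have hzU : z ∈ U := by
              rcases Finset.mem_insert.mp hz with rfl | h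
              · exact absurd (hxy.trans hyz) (lt_irrefl _)
              · exact h
            exact hhom y (hUT hyU) z (hUT hzU) hyz
          · have hyU : y ∈ U := by
              rcases Finset.mem_insert.mp hy with rfl | h
              · exact absurd (hxy.trans' (hvlt x (hUS' hxU))) (lt_irrefl _)
              · exact h
            have hzU : z ∈ U := by
              rcases Finset.mem_insert.mp hz with rfl | h
              · exact absurd (hyz.trans' (hvlt y (hUS' hyU))) (lt_irrefl _)
              · exact h
            exact hUhom x hxU y hyU z hzU hxy hyz
        · exact ⟨U, (hUT.trans hTS), Or.inr ⟨hUcard, hUhom⟩⟩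
      · obtain ⟨U, hUT, hU⟩ := h₂ ι c T (le_of_eq hcard.symm)
        rcases hU with ⟨hUcard, hUhom⟩ | ⟨hUcard, hUhom⟩
        · exact ⟨U, (hUT.trans hTS), Or.inl ⟨hUcard, hUhom⟩⟩
        · have hvU : v ∉ U := fun hvU => lt_irrefl _ (hvlt v (hTS' (hUT hvU)))
          refine ⟨insert v U, Finset.insert_subset hvS ((hUT.trans hTS)),
            Or.inr ⟨by rw [Finset.card_insert_of_notMem hvU, hUcard], ?_⟩⟩
          intro x hx y hy z hz hxy hyz
          have hUS' : U ⊆ S' := hUT.trans hTS'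
          rcases Finset.mem_insert.mp hx with rfl | hxU
          · have hyU : y ∈ U := by
              rcases Finset.mem_insert.mp hy with rfl | h
              · exact absurd hxy (lt_irrefl _)
              · exact h
            have hzU : z ∈ U := by
              rcases Finset.mem_insert.mp hz with rfl | h
              · exact absurd (hxy.trans hyz) (lt_irrefl _)
              · exact h
            exact hhom y (hUT hyU) z (hUT hzU) hyz
          · have hyU : y ∈ U := by
              rcases Finset.mem_insert.mp hy with rfl | h
              · exact absurd (hxy.trans' (hvlt x (hUS' hxU))) (lt_irrefl _)
              · exact h
            have hzU : z ∈ U := by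
              rcases Finset.mem_insert.mp hz with rfl | h
              · exact absurd (hyz.trans' (hvlt y (hUS' hyU))) (lt_irrefl _)
              · exact h
            exact hUhom x hxU y hyU z hzU hxy hyz

end Ramsey

/-- power of a point w.r.t. a circle -/
def pw (c : E2) (r : ℝ) (x : E2) : ℝ := (inner ℝ (x - c) (x - c) : ℝ) - r ^ 2

/-- affine functional -/
def Af (v : E2) (k : ℝ) (x : E2) : ℝ := (inner ℝ x v : ℝ) + k

lemma pw_eq (c : E2) (r : ℝ) (x : E2) : pw c r x = dist x c ^ 2 - r ^ 2 := by
  rw [pw, real_inner_self_eq_norm_sq, dist_eq_norm]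

lemma mem_sphere_iff_pw {c : E2} {r : ℝ} (hr : 0 ≤ r) {x : E2} :
    x ∈ Metric.sphere c r ↔ pw c r x = 0 := by
  rw [Metric.mem_sphere, pw_eq]
  constructor
  · intro h; rw [h]; ring
  · intro h
    nlinarith [dist_nonneg (x := x) (y := c)]

lemma mem_ball_iff_pw {c : E2} {r : ℝ} (hr : 0 < r) {x : E2} :
    x ∈ Metric.ball c r ↔ pw c r x < 0 := by
  rw [Metric.mem_ball, pw_eq]
  constructor
  · intro h; nlinarith [dist_nonneg (x := x) (y := c)]
  · intro h; nlinarith [dist_nonneg (x := x) (y := c)]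

lemma pw_sub_eq_af (c₁ c₂ : E2) (r₁ r₂ : ℝ) (x : E2) :
    pw c₁ r₁ x - pw c₂ r₂ x =
      Af ((2:ℝ) • (c₂ - c₁)) ((inner ℝ c₁ c₁ : ℝ) - (inner ℝ c₂ c₂ : ℝ) - r₁ ^ 2 + r₂ ^ 2) x := by
  simp only [pw, Af, inner_sub_left, inner_sub_right, real_inner_smul_right, inner_add_left,
    inner_add_right]
  rw [real_inner_comm x c₁, real_inner_comm x c₂]
  ring

lemma af_combo (v : E2) (k t : ℝ) (x y : E2) :
    Af v k (x + t • (y - x)) = (1 - t) * Af v k x + t * Af v k y := by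
  simp only [Af, inner_add_left, real_inner_smul_left, inner_sub_left]
  ring

lemma pw_combo (c : E2) (r t : ℝ) (x y : E2) :
    pw c r (x + t • (y - x)) =
      (1 - t) * pw c r x + t * pw c r y + (t ^ 2 - t) * (inner ℝ (y - x) (y - x) : ℝ) := by
  simp only [pw, inner_sub_left, inner_sub_right, inner_add_left, inner_add_right,
    real_inner_smul_left, real_inner_smul_right]
  rw [real_inner_comm x y, real_inner_comm x c, real_inner_comm y c]
  ring

lemma E2_ext {a b : E2} (h0 : a 0 = b 0) (h1 : a 1 = b 1) : a = b := by
  apply PiLp.ext; intro i; fin_cases i <;> assumption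

lemma E2_inner (a b : E2) : (inner ℝ a b : ℝ) = a 0 * b 0 + a 1 * b 1 := by
  simp [PiLp.inner_apply, Fin.sum_univ_two, RCLike.inner_apply, conj_trivial]; ring

lemma perp_dep {v a b : E2} (hv : v ≠ 0) (hb : b ≠ 0)
    (ha : (inner ℝ a v : ℝ) = 0) (hbv : (inner ℝ b v : ℝ) = 0) : ∃ s : ℝ, a = s • b := by
  rw [E2_inner] at ha hbv
  have hvc : v 0 ≠ 0 ∨ v 1 ≠ 0 := by
    by_contra h
    push_neg at h
    exact hv (E2_ext h.1 h.2)
  have hbc : b 0 ≠ 0 ∨ b 1 ≠ 0 := by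
    by_contra h
    push_neg at h
    exact hb (E2_ext h.1 h.2)
  have hdet : a 0 * b 1 - a 1 * b 0 = 0 := by
    rcases hvc with h | h
    · have e1 : a 0 = -(a 1 * v 1) / v 0 := by field_simp; linarith
      have e2 : b 0 = -(b 1 * v 1) / v 0 := by field_simp; linarith
      rw [e1, e2]; field_simp; ring
    · have e1 : a 1 = -(a 0 * v 0) / v 1 := by field_simp; linarith
      have e2 : b 1 = -(b 0 * v 0) / v 1 := by field_simp; linarith
      rw [e1, e2]; field_simp; ring
  rcases hbc with h | h
  · refine ⟨a 0 / b 0, E2_ext ?_ ?_⟩ <;> simp [PiLp.smul_apply] <;> field_simp <;> linarith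
  · refine ⟨a 1 / b 1, E2_ext ?_ ?_⟩ <;> simp [PiLp.smul_apply] <;> field_simp <;> linarith


set_option maxHeartbeats 2000000 in
/-- Key lemma: two chords of a circle; if one chord's line separates the endpoints of the
other chord, then vice versa. Stated with affine functionals. -/
lemma cross {c : E2} {r : ℝ} (hr : 0 < r) {v₁ v₂ : E2} {k₁ k₂ : ℝ} {p q u w : E2}
    (hpS : p ∈ Metric.sphere c r) (hqS : q ∈ Metric.sphere c r)
    (huS : u ∈ Metric.sphere c r) (hwS : w ∈ Metric.sphere c r)
    (hpq : p ≠ q) (huw : u ≠ w)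
    (hAp : Af v₁ k₁ p = 0) (hAq : Af v₁ k₁ q = 0)
    (hBu : Af v₂ k₂ u = 0) (hBw : Af v₂ k₂ w = 0)
    (hBp : Af v₂ k₂ p ≠ 0) (hAu : Af v₁ k₁ u ≠ 0) (hAw : Af v₁ k₁ w ≠ 0)
    (hneg : Af v₂ k₂ p * Af v₂ k₂ q < 0) : Af v₁ k₁ u * Af v₁ k₁ w < 0 := by
  have hrle : (0:ℝ) ≤ r := le_of_lt hr
  have hpw_p : pw c r p = 0 := (mem_sphere_iff_pw hrle).mp hpS
  have hpw_q : pw c r q = 0 := (mem_sphere_iff_pw hrle).mp hqS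
  have hpw_u : pw c r u = 0 := (mem_sphere_iff_pw hrle).mp huS
  have hpw_w : pw c r w = 0 := (mem_sphere_iff_pw hrle).mp hwS
  set t : ℝ := Af v₂ k₂ p / (Af v₂ k₂ p - Af v₂ k₂ q) with hts
  have hd : Af v₂ k₂ p - Af v₂ k₂ q ≠ 0 := by
    rcases mul_neg_iff.mp hneg with ⟨h1, h2⟩ | ⟨h1, h2⟩ <;> intro h <;> nlinarith
  have ht0 : 0 < t := by
    rw [hts, div_pos_iff]
    rcases mul_neg_iff.mp hneg with ⟨h1, h2⟩ | ⟨h1, h2⟩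
    · exact Or.inl ⟨h1, by linarith⟩
    · exact Or.inr ⟨h1, by linarith⟩
  have ht1 : t < 1 := by
    rw [hts, div_lt_one_iff]
    rcases mul_neg_iff.mp hneg with ⟨h1, h2⟩ | ⟨h1, h2⟩
    · exact Or.inl ⟨by linarith, by linarith⟩
    · exact Or.inr (Or.inr ⟨by linarith, by linarith⟩)
  set z : E2 := p + t • (q - p) with hz
  have hBz : Af v₂ k₂ z = 0 := by
    rw [hz, af_combo, hts]
    field_simp
    ring
  have hAz : Af v₁ k₁ z = 0 := by rw [hz, af_combo, hAp, hAq]; ring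
  have hqp : (inner ℝ (q - p) (q - p) : ℝ) > 0 := by
    rw [real_inner_self_eq_norm_sq]
    exact pow_pos (norm_pos_iff.mpr (sub_ne_zero.mpr hpq.symm)) 2
  have hzin : pw c r z < 0 := by
    rw [hz, pw_combo, hpw_p, hpw_q]
    have : t ^ 2 - t < 0 := by nlinarith
    nlinarith
  have hv₂ : v₂ ≠ 0 := by
    intro h
    apply hBp
    have : Af v₂ k₂ p = Af v₂ k₂ u := by simp [Af, h, inner_zero_right]
    rw [this, hBu]
  have hzu : (inner ℝ (z - u) v₂ : ℝ) = 0 := by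
    have : Af v₂ k₂ z - Af v₂ k₂ u = (inner ℝ (z - u) v₂ : ℝ) := by
      simp [Af, inner_sub_left]
    rw [← this, hBz, hBu]; ring
  have hwu : (inner ℝ (w - u) v₂ : ℝ) = 0 := by
    have : Af v₂ k₂ w - Af v₂ k₂ u = (inner ℝ (w - u) v₂ : ℝ) := by
      simp [Af, inner_sub_left]
    rw [← this, hBw, hBu]; ring
  obtain ⟨s, hs⟩ := perp_dep hv₂ (sub_ne_zero.mpr huw.symm) hzu hwu
  have hzs : z = u + s • (w - u) := by rw [← hs]; abel
  have hwu2 : (inner ℝ (w - u) (w - u) : ℝ) > 0 := by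
    rw [real_inner_self_eq_norm_sq]
    exact pow_pos (norm_pos_iff.mpr (sub_ne_zero.mpr huw.symm)) 2
  have hzin2 : pw c r z = (s ^ 2 - s) * (inner ℝ (w - u) (w - u) : ℝ) := by
    rw [hzs, pw_combo, hpw_u, hpw_w]; ring
  have hs01 : 0 < s ∧ s < 1 := by
    rw [hzin2] at hzin
    have hss : s ^ 2 - s < 0 := by nlinarith
    constructor <;> nlinarith
  have hAcombo : (1 - s) * Af v₁ k₁ u + s * Af v₁ k₁ w = 0 := by
    rw [← af_combo, ← hzs, hAz]
  have hAu2 : 0 < Af v₁ k₁ u * Af v₁ k₁ u := mul_self_pos.mpr hAu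
  nlinarith [hs01.1, hs01.2, hAu2, mul_eq_zero_of_left hAcombo (Af v₁ k₁ u)]

lemma xor_lt_iff_mul_neg {a b : ℝ} (ha : a ≠ 0) (hb : b ≠ 0) :
    Xor' (a < 0) (b < 0) ↔ a * b < 0 := by
  rw [mul_neg_iff]
  rcases ha.lt_or_gt with h1 | h1 <;> rcases hb.lt_or_gt with h2 | h2 <;>
    simp [Xor'] <;> constructor <;> intro h <;> first
      | (exfalso; rcases h with ⟨hx, hy⟩ | ⟨hx, hy⟩ <;> linarith)
      | (rcases h with ⟨hx, hy⟩ <;> linarith)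
      | (left; constructor <;> linarith)
      | (right; constructor <;> linarith)
      | linarith

/-- main geometric symmetry: separation rotates through the triple. -/
lemma sep_rotate {c₁ c₂ c₃ : E2} {r₁ r₂ r₃ : ℝ} (h1 : 0 < r₁) (h2 : 0 < r₂) (h3 : 0 < r₃)
    {p q u w : E2} (hpq : p ≠ q) (huw : u ≠ w)
    (h12 : Metric.sphere c₁ r₁ ∩ Metric.sphere c₂ r₂ = {p, q})
    (h23 : Metric.sphere c₂ r₂ ∩ Metric.sphere c₃ r₃ = {u, w})
    (htriple : ∀ x : E2, ¬ (x ∈ Metric.sphere c₁ r₁ ∧ x ∈ Metric.sphere c₂ r₂ ∧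
      x ∈ Metric.sphere c₃ r₃)) :
    (Separates c₃ r₃ p q ↔ Separates c₁ r₁ u w) := by
  have hp12 : p ∈ Metric.sphere c₁ r₁ ∩ Metric.sphere c₂ r₂ := by rw [h12]; left; rfl
  have hq12 : q ∈ Metric.sphere c₁ r₁ ∩ Metric.sphere c₂ r₂ := by rw [h12]; right; rfl
  have hu23 : u ∈ Metric.sphere c₂ r₂ ∩ Metric.sphere c₃ r₃ := by rw [h23]; left; rfl
  have hw23 : w ∈ Metric.sphere c₂ r₂ ∩ Metric.sphere c₃ r₃ := by rw [h23]; right; rfl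
  have hp3 : p ∉ Metric.sphere c₃ r₃ := fun h => htriple p ⟨hp12.1, hp12.2, h⟩
  have hq3 : q ∉ Metric.sphere c₃ r₃ := fun h => htriple q ⟨hq12.1, hq12.2, h⟩
  have hu1 : u ∉ Metric.sphere c₁ r₁ := fun h => htriple u ⟨h, hu23.1, hu23.2⟩
  have hw1 : w ∉ Metric.sphere c₁ r₁ := fun h => htriple w ⟨h, hw23.1, hw23.2⟩
  have hpw3p : pw c₃ r₃ p ≠ 0 := fun h => hp3 ((mem_sphere_iff_pw h3.le).mpr h)
  have hpw3q : pw c₃ r₃ q ≠ 0 := fun h => hq3 ((mem_sphere_iff_pw h3.le).mpr h)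
  have hpw1u : pw c₁ r₁ u ≠ 0 := fun h => hu1 ((mem_sphere_iff_pw h1.le).mpr h)
  have hpw1w : pw c₁ r₁ w ≠ 0 := fun h => hw1 ((mem_sphere_iff_pw h1.le).mpr h)
  -- affine functionals
  set v₁ : E2 := (2:ℝ) • (c₂ - c₁) with hv₁
  set k₁ : ℝ := (inner ℝ c₁ c₁ : ℝ) - (inner ℝ c₂ c₂ : ℝ) - r₁ ^ 2 + r₂ ^ 2 with hk₁
  set v₂ : E2 := (2:ℝ) • (c₂ - c₃) with hv₂
  set k₂ : ℝ := (inner ℝ c₃ c₃ : ℝ) - (inner ℝ c₂ c₂ : ℝ) - r₃ ^ 2 + r₂ ^ 2 with hk₂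
  have hA : ∀ x, Af v₁ k₁ x = pw c₁ r₁ x - pw c₂ r₂ x := fun x => (pw_sub_eq_af c₁ c₂ r₁ r₂ x).symm
  have hB : ∀ x, Af v₂ k₂ x = pw c₃ r₃ x - pw c₂ r₂ x := fun x => (pw_sub_eq_af c₃ c₂ r₃ r₂ x).symm
  have hpw2p : pw c₂ r₂ p = 0 := (mem_sphere_iff_pw h2.le).mp hp12.2
  have hpw2q : pw c₂ r₂ q = 0 := (mem_sphere_iff_pw h2.le).mp hq12.2
  have hpw2u : pw c₂ r₂ u = 0 := (mem_sphere_iff_pw h2.le).mp hu23.1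
  have hpw2w : pw c₂ r₂ w = 0 := (mem_sphere_iff_pw h2.le).mp hw23.1
  have hpw1p : pw c₁ r₁ p = 0 := (mem_sphere_iff_pw h1.le).mp hp12.1
  have hpw1q : pw c₁ r₁ q = 0 := (mem_sphere_iff_pw h1.le).mp hq12.1
  have hpw3u : pw c₃ r₃ u = 0 := (mem_sphere_iff_pw h3.le).mp hu23.2
  have hpw3w : pw c₃ r₃ w = 0 := (mem_sphere_iff_pw h3.le).mp hw23.2
  have hAp : Af v₁ k₁ p = 0 := by rw [hA, hpw1p, hpw2p]; ring
  have hAq : Af v₁ k₁ q = 0 := by rw [hA, hpw1q, hpw2q]; ring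
  have hBu : Af v₂ k₂ u = 0 := by rw [hB, hpw3u, hpw2u]; ring
  have hBw : Af v₂ k₂ w = 0 := by rw [hB, hpw3w, hpw2w]; ring
  have hBp : Af v₂ k₂ p = pw c₃ r₃ p := by rw [hB, hpw2p]; ring
  have hBq : Af v₂ k₂ q = pw c₃ r₃ q := by rw [hB, hpw2q]; ring
  have hAu : Af v₁ k₁ u = pw c₁ r₁ u := by rw [hA, hpw2u]; ring
  have hAw : Af v₁ k₁ w = pw c₁ r₁ w := by rw [hA, hpw2w]; ring
  have hSep3 : Separates c₃ r₃ p q ↔ pw c₃ r₃ p * pw c₃ r₃ q < 0 := by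
    rw [Separates, mem_ball_iff_pw h3, mem_ball_iff_pw h3]
    exact xor_lt_iff_mul_neg hpw3p hpw3q
  have hSep1 : Separates c₁ r₁ u w ↔ pw c₁ r₁ u * pw c₁ r₁ w < 0 := by
    rw [Separates, mem_ball_iff_pw h1, mem_ball_iff_pw h1]
    exact xor_lt_iff_mul_neg hpw1u hpw1w
  rw [hSep3, hSep1]
  constructor
  · intro h
    rw [← hAu, ← hAw]
    exact cross h2 hp12.2 hq12.2 hu23.1 hw23.1 hpq huw hAp hAq hBu hBw
      (by rw [hBp]; exact hpw3p) (by rw [hAu]; exact hpw1u) (by rw [hAw]; exact hpw1w)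
      (by rw [hBp, hBq]; exact h)
  · intro h
    rw [← hBp, ← hBq]
    exact cross h2 hu23.1 hw23.1 hp12.2 hq12.2 huw hpq hBu hBw hAp hAq
      (by rw [hAu]; exact hpw1u) (by rw [hBp]; exact hpw3p) (by rw [hBq]; exact hpw3q)
      (by rw [hAu, hAw]; exact h)

lemma sepInt_iff {c c₁ c₂ : E2} {r r₁ r₂ : ℝ} {x y : E2} (hxy : x ≠ y)
    (hint : Metric.sphere c₁ r₁ ∩ Metric.sphere c₂ r₂ = {x, y}) :
    SepInt c r c₁ r₁ c₂ r₂ ↔ Separates c r x y := by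
  constructor
  · intro h; exact h x y hxy hint
  · intro hs p q hpq h
    have hpair : ({p, q} : Set E2) = {x, y} := by rw [← h, hint]
    rcases Set.pair_eq_pair_iff.mp hpair with ⟨rfl, rfl⟩ | ⟨rfl, rfl⟩
    · exact hs
    · rw [Separates, Xor', xor_comm]; exact hs

lemma nonSepInt_iff {c c₁ c₂ : E2} {r r₁ r₂ : ℝ} {x y : E2} (hxy : x ≠ y)
    (hint : Metric.sphere c₁ r₁ ∩ Metric.sphere c₂ r₂ = {x, y}) :
    NonSepInt c r c₁ r₁ c₂ r₂ ↔ ¬ Separates c r x y := by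
  constructor
  · intro h; exact h x y hxy hint
  · intro hs p q hpq h
    have hpair : ({p, q} : Set E2) = {x, y} := by rw [← h, hint]
    rcases Set.pair_eq_pair_iff.mp hpair with ⟨rfl, rfl⟩ | ⟨rfl, rfl⟩
    · exact hs
    · rw [Separates, Xor', xor_comm]; exact hs

lemma sepInt_rot {c₁ c₂ c₃ : E2} {r₁ r₂ r₃ : ℝ} (h1 : 0 < r₁) (h2 : 0 < r₂) (h3 : 0 < r₃)
    (hex12 : ∃ x y : E2, x ≠ y ∧ Metric.sphere c₁ r₁ ∩ Metric.sphere c₂ r₂ = {x, y})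
    (hex23 : ∃ x y : E2, x ≠ y ∧ Metric.sphere c₂ r₂ ∩ Metric.sphere c₃ r₃ = {x, y})
    (htriple : ∀ x : E2, ¬ (x ∈ Metric.sphere c₁ r₁ ∧ x ∈ Metric.sphere c₂ r₂ ∧
      x ∈ Metric.sphere c₃ r₃)) :
    (SepInt c₃ r₃ c₁ r₁ c₂ r₂ ↔ SepInt c₁ r₁ c₂ r₂ c₃ r₃) := by
  obtain ⟨x, y, hxy, h12⟩ := hex12
  obtain ⟨u, w, huw, h23⟩ := hex23
  rw [sepInt_iff hxy h12, sepInt_iff huw h23]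
  exact sep_rotate h1 h2 h3 hxy huw h12 h23 htriple

/-- For every integer `p ≥ 3` there exists an integer `N` such that every arrangement of at
least `N` circles in the plane contains `p` circles every three of which form a Krupp triple,
or `p` circles every three of which form a NonKrupp triple. -/
theorem stmt3 (p : ℕ) (hp : 3 ≤ p) :
    ∃ N : ℕ, ∀ n : ℕ, N ≤ n → ∀ ctr : Fin n → E2, ∀ rad : Fin n → ℝ,
      (∀ i, 0 < rad i) →
      (∀ i j : Fin n, i ≠ j → ∃ x y : E2, x ≠ y ∧
        Metric.sphere (ctr i) (rad i) ∩ Metric.sphere (ctr j) (rad j) = {x, y}) →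
      (∀ i j k : Fin n, i ≠ j → i ≠ k → j ≠ k → ∀ x : E2,
        ¬ (x ∈ Metric.sphere (ctr i) (rad i) ∧ x ∈ Metric.sphere (ctr j) (rad j) ∧
          x ∈ Metric.sphere (ctr k) (rad k))) →
      ∃ f : Fin p → Fin n, Function.Injective f ∧
        ((∀ a b c : Fin p, a ≠ b → a ≠ c → b ≠ c →
            SepInt (ctr (f a)) (rad (f a)) (ctr (f b)) (rad (f b)) (ctr (f c)) (rad (f c))) ∨
         (∀ a b c : Fin p, a ≠ b → a ≠ c → b ≠ c →
            NonSepInt (ctr (f a)) (rad (f a)) (ctr (f b)) (rad (f b)) (ctr (f c)) (rad (f c)))) := by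
  classical
  obtain ⟨N, hN⟩ := ramsey3aux (p + p) p p le_rfl
  refine ⟨N, ?_⟩
  intro n hn ctr rad hrad hInt hTriple
  set K : Fin n → Fin n → Fin n → Prop := fun i j k =>
    SepInt (ctr i) (rad i) (ctr j) (rad j) (ctr k) (rad k) with hK
  have hrot : ∀ i j k : Fin n, i ≠ j → i ≠ k → j ≠ k → (K i j k ↔ K j k i) := by
    intro i j k hij hik hjk
    exact sepInt_rot (hrad j) (hrad k) (hrad i) (hInt j k hjk) (hInt k i hik.symm)
      (fun x hx => hTriple j k i hjk hij.symm hik.symm x hx)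
  have hswap : ∀ i j k : Fin n, i ≠ j → i ≠ k → j ≠ k → (K i j k ↔ K i k j) := by
    intro i j k _ _ _
    constructor <;>
      · intro h p' q' hpq' hint
        apply h p' q' hpq'
        rwa [Set.inter_comm]
  set col : Fin n → Fin n → Fin n → Bool := fun i j k => if K i j k then true else false
    with hcol
  have hcolK : ∀ i j k, col i j k = true ↔ K i j k := by
    intro i j k
    simp [hcol]
  obtain ⟨T, _, hT⟩ := hN (Fin n) col Finset.univ (by simpa using hn)
  have hall : ∀ (P : Fin n → Fin n → Fin n → Prop),
      (∀ i j k, i ≠ j → i ≠ k → j ≠ k → (P i j k ↔ P j k i)) →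
      (∀ i j k, i ≠ j → i ≠ k → j ≠ k → (P i j k ↔ P i k j)) →
      (∀ x ∈ T, ∀ y ∈ T, ∀ z ∈ T, x < y → y < z → P x y z) →
      ∀ x ∈ T, ∀ y ∈ T, ∀ z ∈ T, x ≠ y → x ≠ z → y ≠ z → P x y z := by
    intro P hR hS hsorted x hx y hy z hz hxy hxz hyz
    rcases lt_trichotomy x y with h1 | h1 | h1
    · rcases lt_trichotomy y z with h2 | h2 | h2
      · exact hsorted x hx y hy z hz h1 h2
      · exact absurd h2 hyz
      · rcases lt_trichotomy x z with h3 | h3 | h3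
        · exact (hS x y z hxy hxz hyz).mpr (hsorted x hx z hz y hy h3 h2)
        · exact absurd h3 hxz
        · exact ((hR x y z hxy hxz hyz).trans (hR y z x hyz hxy.symm hxz.symm)).mpr
            (hsorted z hz x hx y hy h3 h1)
    · exact absurd h1 hxy
    · rcases lt_trichotomy x z with h2 | h2 | h2
      · exact ((hR x y z hxy hxz hyz).trans (hS y z x hyz hxy.symm hxz.symm)).mpr
          (hsorted y hy x hx z hz h1 h2)
      · exact absurd h2 hxz
      · rcases lt_trichotomy y z with h3 | h3 | h3
        · exact (hR x y z hxy hxz hyz).mpr (hsorted y hy z hz x hx h3 h2)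
        · exact absurd h3 hyz
        · exact ((hR x y z hxy hxz hyz).trans ((hR y z x hyz hxy.symm hxz.symm).trans
            (hS z x y hxz.symm hyz.symm hxy))).mpr (hsorted z hz y hy x hx h3 h1)
  rcases hT with ⟨hcard, hhom⟩ | ⟨hcard, hhom⟩
  · set f : Fin p → Fin n := fun a => ((T.orderIsoOfFin hcard) a : Fin n) with hf
    have hfmem : ∀ a, f a ∈ T := fun a => ((T.orderIsoOfFin hcard) a).2
    have hfinj : Function.Injective f := fun a b h =>
      (T.orderIsoOfFin hcard).injective (Subtype.coe_injective h)
    refine ⟨f, hfinj, Or.inl ?_⟩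
    intro a b c hab hac hbc
    have hsorted : ∀ x ∈ T, ∀ y ∈ T, ∀ z ∈ T, x < y → y < z → K x y z := by
      intro x hx y hy z hz h1 h2
      exact (hcolK x y z).mp (hhom x hx y hy z hz h1 h2)
    exact hall K hrot hswap hsorted (f a) (hfmem a) (f b) (hfmem b) (f c) (hfmem c)
      (fun h => hab (hfinj h)) (fun h => hac (hfinj h)) (fun h => hbc (hfinj h))
  · set f : Fin p → Fin n := fun a => ((T.orderIsoOfFin hcard) a : Fin n) with hf
    have hfmem : ∀ a, f a ∈ T := fun a => ((T.orderIsoOfFin hcard) a).2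
    have hfinj : Function.Injective f := fun a b h =>
      (T.orderIsoOfFin hcard).injective (Subtype.coe_injective h)
    refine ⟨f, hfinj, Or.inr ?_⟩
    intro a b c hab hac hbc
    have hsorted : ∀ x ∈ T, ∀ y ∈ T, ∀ z ∈ T, x < y → y < z → ¬ K x y z := by
      intro x hx y hy z hz h1 h2 hk
      have := hhom x hx y hy z hz h1 h2
      rw [← hcolK x y z] at hk
      rw [this] at hk
      exact Bool.false_ne_true hk
    have hnk : ¬ K (f a) (f b) (f c) :=
      hall (fun i j k => ¬ K i j k)
        (fun i j k h1 h2 h3 => not_congr (hrot i j k h1 h2 h3))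
        (fun i j k h1 h2 h3 => not_congr (hswap i j k h1 h2 h3))
        hsorted (f a) (hfmem a) (f b) (hfmem b) (f c) (hfmem c)
        (fun h => hab (hfinj h)) (fun h => hac (hfinj h)) (fun h => hbc (hfinj h))
    have hbc' : f b ≠ f c := fun h => hbc (hfinj h)
    obtain ⟨x, y, hxy, hint⟩ := hInt (f b) (f c) hbc'
    rw [nonSepInt_iff hxy hint]
    exact (not_congr (sepInt_iff hxy hint)).mp hnk
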